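/- Let A be a finite alphabet. Suppose C ⊆ A³ and there exist distinct x, y ∈ C with dH(x,y) ≤ 2. Then for every pair of functions f₁ : A → A and f₂ : A × A → A, C is not unambiguous for the Diamond Network: there exists z ∈ Ω(x) ∩ Ω(y). -/
import Mathlib


open Finset

/-- Hamming distance on triples. -/
def dH3 {A : Type*} [DecidableEq A] (x y : A × A × A) : ℕ :=
  (if x.1 = y.1 then 0 else 1) + (if x.2.1 = y.2.1 then 0 else 1) +
    (if x.2.2 = y.2.2 then 0 else 1)

/-- The set of possible outputs at the terminal of the Diamond Network. -/
def Omega {A : Type*} [Fintype A] [DecidableEq A] (f₁ : A → A) (f₂ : A → A → A)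
    (x : A × A × A) : Finset (A × A) :=
  (Finset.univ.filter fun x' : A × A × A => dH3 x' x ≤ 1).image
    fun x' => (f₁ x'.1, f₂ x'.2.1 x'.2.2)

/-- An outer code is unambiguous if output sets of distinct codewords are disjoint. -/
def Unambiguous {A : Type*} [Fintype A] [DecidableEq A] (f₁ : A → A) (f₂ : A → A → A)
    (C : Finset (A × A × A)) : Prop :=
  ∀ x ∈ C, ∀ y ∈ C, x ≠ y → Disjoint (Omega f₁ f₂ x) (Omega f₁ f₂ y)

lemma mem_Omega {A : Type*} [Fintype A] [DecidableEq A] (f₁ : A → A) (f₂ : A → A → A)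
    (x : A × A × A) (z : A × A) :
    z ∈ Omega f₁ f₂ x ↔ ∃ x' : A × A × A, dH3 x' x ≤ 1 ∧ (f₁ x'.1, f₂ x'.2.1 x'.2.2) = z := by
  simp [Omega]

theorem stmt15 {A : Type*} [Fintype A] [DecidableEq A] (C : Finset (A × A × A))
    (x y : A × A × A) (hx : x ∈ C) (hy : y ∈ C) (hxy : x ≠ y) (hd : dH3 x y ≤ 2) :
    ∀ (f₁ : A → A) (f₂ : A → A → A),
      ∃ z : A × A, z ∈ Omega f₁ f₂ x ∧ z ∈ Omega f₁ f₂ y := by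
  intro f₁ f₂
  by_cases h1 : x.1 = y.1
  · refine ⟨(f₁ x.1, f₂ y.2.1 x.2.2), ?_, ?_⟩
    · rw [mem_Omega]
      exact ⟨(x.1, y.2.1, x.2.2), by simp [dH3]; split_ifs <;> omega, rfl⟩
    · rw [mem_Omega]
      exact ⟨(y.1, y.2.1, x.2.2), by simp [dH3]; split_ifs <;> omega, by simp [h1]⟩
  · refine ⟨(f₁ y.1, f₂ x.2.1 x.2.2), ?_, ?_⟩
    · rw [mem_Omega]
      exact ⟨(y.1, x.2.1, x.2.2), by simp [dH3]; split_ifs <;> omega, rfl⟩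
    · rw [mem_Omega]
      refine ⟨(y.1, x.2.1, x.2.2), ?_, rfl⟩
      simp only [dH3] at hd ⊢
      split_ifs at hd ⊢ <;> simp_all <;> omega
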